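/- Under the same setup, the unique maximizer x' of h(x) = (ε e^{-r} - x)/(1 + (1/2)(c/x)^{1/α}) on (0, ε e^{-r}] satisfies the bounds ε e^{-r}·( (2α/c^{1/α})(ε e^{-r}/(1+α))^{1/α} + (1+α) )^{-1} < x' < ε e^{-r}/(1+α). -/
import Mathlib


theorem maximizer_bounds (α ε r c x' : ℝ) (hα : α ∈ Set.Ioc (0:ℝ) 2) (hε : 0 < ε)
    (hr : 0 < r) (hc : 0 < c)
    (hx' : x' ∈ Set.Ioc (0:ℝ) (ε * Real.exp (-r)))
    (hstat : (2 * α / c ^ (1/α)) * x' ^ (1 + 1/α) = ε * Real.exp (-r) - (1 + α) * x') :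
    ε * Real.exp (-r) *
        ((2 * α / c ^ (1/α)) * (ε * Real.exp (-r) / (1 + α)) ^ (1/α) + (1 + α))⁻¹ < x' ∧
      x' < ε * Real.exp (-r) / (1 + α) := by
  obtain ⟨hα0, _⟩ := hα
  obtain ⟨hx0, hxE⟩ := hx'
  set E : ℝ := ε * Real.exp (-r) with hEdef
  have hE : 0 < E := mul_pos hε (Real.exp_pos _)
  set K : ℝ := 2 * α / c ^ (1/α) with hKdef
  have hK : 0 < K := div_pos (by linarith) (Real.rpow_pos_of_pos hc _)
  have h1α : (0:ℝ) < 1 + α := by linarith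
  have hinv : (0:ℝ) < 1/α := by positivity
  have hxpow : 0 < x' ^ (1/α) := Real.rpow_pos_of_pos hx0 _
  have hsplit : x' ^ (1 + 1/α) = x' * x' ^ (1/α) := by
    rw [Real.rpow_add hx0, Real.rpow_one]
  have hE_eq : E = x' * (K * x' ^ (1/α) + (1 + α)) := by
    have := hstat
    rw [hsplit] at this
    ring_nf
    ring_nf at this
    linarith
  have hupper : x' < E / (1 + α) := by
    rw [lt_div_iff₀ h1α]
    nlinarith [mul_pos hK hxpow, mul_pos hx0 (mul_pos hK hxpow)]
  refine ⟨?_, hupper⟩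
  have hpowlt : x' ^ (1/α) < (E / (1 + α)) ^ (1/α) :=
    Real.rpow_lt_rpow hx0.le hupper hinv
  have hD : 0 < K * (E / (1 + α)) ^ (1/α) + (1 + α) := by
    have := Real.rpow_pos_of_pos (div_pos hE h1α) (1/α)
    nlinarith
  have hElt : E < x' * (K * (E / (1 + α)) ^ (1/α) + (1 + α)) := by
    have h2 := mul_pos hx0 (sub_pos.mpr (mul_lt_mul_of_pos_left hpowlt hK))
    nlinarith [hE_eq]
  rw [mul_inv_lt_iff₀' hD] at *
  nlinarith
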